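/- Let n ≥ 3, let R be an infinite (n-1)-rigid ring, let Q be the stabilizer of e₁ in E_n(R), and let g₁, ..., g_{n-2} ∈ E_n(R) with g_i e₁ = x_i e₁ + u_i where u_i lies in the span U of e₂,...,e_n. Let Φ = {φ ∈ Hom_R(U, R) : φ(u_i) = 0 for all i}, and for φ ∈ Φ let T_φ(v) = v + φ(p(v))e₁ where p : R^n → U is the projection. Then T = {T_φ : φ ∈ Φ} is a normal subgroup of Q ∩ g₁Qg₁⁻¹ ∩ ... ∩ g_{n-2}Qg_{n-2}⁻¹. -/

import Mathlib

variable (R : Type*) [Ring R] (n : ℕ)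

/-- `E_n(R)`: the subgroup of `GL_n(R)` generated by the elementary matrices
`e_{ij}(r) = I_n + r·E_{ij}`, `i ≠ j`, `r ∈ R`. -/
def ElemGroup : Subgroup (Matrix (Fin n) (Fin n) R)ˣ :=
  Subgroup.closure {g | ∃ i j : Fin n, ∃ r : R, i ≠ j ∧
    g.val = 1 + Matrix.single i j r}

/-- The first standard basis (column) vector `e₁` of `Rⁿ`. -/
def eOne : Fin n → R := fun k => if k.val = 0 then 1 else 0

/-- `Q`: the stabilizer of `e₁` in `E_n(R)`. -/
def Qstab : Set ((Matrix (Fin n) (Fin n) R)ˣ) :=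
  {g | g ∈ ElemGroup R n ∧ Matrix.mulVec g.val (eOne R n) = eOne R n}

/-- The inclusion `Fin (n-1) → Fin n` hitting the indices `2, …, n`
(`0`-indexed: `1, …, n-1`), identifying `U = ⟨e₂, …, e_n⟩` with `Rⁿ⁻¹`. -/
def iota (k : Fin (n - 1)) : Fin n := ⟨k.val + 1, by have := k.isLt; omega⟩

/-- The projection `p : Rⁿ → U = Rⁿ⁻¹` onto the last `n - 1` coordinates. -/
def proj (v : Fin n → R) : Fin (n - 1) → R := fun k => v (iota n k)

/-- The vector `uᵢ ∈ U`, where `gᵢ e₁ = xᵢ e₁ + uᵢ`. -/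
def uVec (g : (Matrix (Fin n) (Fin n) R)ˣ) : Fin (n - 1) → R :=
  proj R n (Matrix.mulVec g.val (eOne R n))

/-- `Φ`: right-`R`-linear functionals on `U` vanishing on all the `uᵢ`. -/
def Phi {m : ℕ} (g : Fin m → (Matrix (Fin n) (Fin n) R)ˣ) :
    Set ((Fin (n - 1) → R) →ₗ[Rᵐᵒᵖ] R) :=
  {φ | ∀ i, φ (uVec R n (g i)) = 0}

/-- The matrix of the transformation `T_φ : v ↦ v + φ(p(v))·e₁`. -/
def Tmat (φ : (Fin (n - 1) → R) →ₗ[Rᵐᵒᵖ] R) : Matrix (Fin n) (Fin n) R :=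
  Matrix.of fun i j =>
    if i = j then 1
    else if h : j.val = 0 then 0
    else if i.val = 0 then φ (Pi.single (⟨j.val - 1, by have := j.isLt; omega⟩ : Fin (n - 1)) 1)
    else 0

/-- `T = {T_φ : φ ∈ Φ}` as a subset of `GL_n(R)`. -/
def Tset {m : ℕ} (g : Fin m → (Matrix (Fin n) (Fin n) R)ˣ) :
    Set ((Matrix (Fin n) (Fin n) R)ˣ) :=
  {t | ∃ φ ∈ Phi R n g, t.val = Tmat R n φ}

open Matrix

/-- `e₁` scaled (on the right) by `c`. -/
def eSc (c : R) : Fin n → R := fun i => if i.val = 0 then c else 0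

/-- embedding of `U = Rⁿ⁻¹` into `Rⁿ`. -/
def emb (u : Fin (n - 1) → R) : Fin n → R :=
  fun i => if h : i.val = 0 then 0 else u ⟨i.val - 1, by have := i.isLt; omega⟩

/-- the row vector of `T_φ`. -/
def rvec (φ : (Fin (n - 1) → R) →ₗ[Rᵐᵒᵖ] R) : Fin n → R :=
  fun j => if h : j.val = 0 then 0
    else φ (Pi.single (⟨j.val - 1, by have := j.isLt; omega⟩ : Fin (n - 1)) 1)

-- ===================== auxiliary lemmas =====================

theorem phi_sum {m : ℕ} (φ : (Fin m → R) →ₗ[Rᵐᵒᵖ] R) (u : Fin m → R) :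
    φ u = ∑ k, φ (Pi.single k 1) * u k := by
  have h : u = ∑ k, MulOpposite.op (u k) • Pi.single k (1 : R) := by
    ext j
    rw [Finset.sum_apply]
    have h2 : ∀ k : Fin m, ((MulOpposite.op (u k) • Pi.single k (1 : R) : Fin m → R)) j
        = if j = k then u k else 0 := by
      intro k
      simp [Pi.single_apply, op_smul_eq_mul]
    rw [Finset.sum_congr rfl fun k _ => h2 k]
    simp
  conv_lhs => rw [h, map_sum]
  refine Finset.sum_congr rfl fun k _ => ?_
  rw [LinearMap.map_smul]
  simp [op_smul_eq_mul]

theorem sum_split (hn : 0 < n) (F : Fin n → R) :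
    ∑ j, F j = F ⟨0, hn⟩ + ∑ k : Fin (n - 1), F (iota n k) := by
  have h : n - 1 + 1 = n := by omega
  calc ∑ j, F j = ∑ j : Fin (n - 1 + 1), F (Fin.cast h j) :=
        (Fintype.sum_equiv (finCongr h) _ _ fun i => rfl).symm
    _ = F (Fin.cast h 0) + ∑ k : Fin (n - 1), F (Fin.cast h k.succ) := Fin.sum_univ_succ _
    _ = F ⟨0, hn⟩ + ∑ k : Fin (n - 1), F (iota n k) := by
        have h0 : Fin.cast h 0 = (⟨0, hn⟩ : Fin n) := rfl
        rw [h0]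
        exact congrArg _ (Finset.sum_congr rfl fun k _ => rfl)

theorem Tmat_apply' (φ : (Fin (n - 1) → R) →ₗ[Rᵐᵒᵖ] R) (i j : Fin n) :
    Tmat R n φ i j = (if i = j then 1 else 0) + (if i.val = 0 then rvec R n φ j else 0) := by
  by_cases hij : i = j
  · subst hij
    by_cases hi : i.val = 0 <;> simp [Tmat, rvec, hi]
  · have : ¬ (i.val = 0 ∧ j.val = 0) := fun ⟨a, b⟩ => hij (Fin.ext (a.trans b.symm))
    by_cases hi : i.val = 0 <;> by_cases hj : j.val = 0 <;>
      simp [Tmat, rvec, hij, hi, hj] <;> tauto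

theorem proj_add (v w : Fin n → R) : proj R n (v + w) = proj R n v + proj R n w := rfl

theorem proj_eSc (c : R) : proj R n (eSc R n c) = 0 := by
  funext k
  simp [proj, eSc, iota]

theorem mulVec_Tmat (hn : 0 < n) (φ : (Fin (n - 1) → R) →ₗ[Rᵐᵒᵖ] R) (v : Fin n → R) :
    Tmat R n φ *ᵥ v = v + eSc R n (φ (proj R n v)) := by
  have key : ∑ j, rvec R n φ j * v j = φ (proj R n v) := by
    rw [sum_split R n hn, phi_sum]
    have h0 : rvec R n φ ⟨0, hn⟩ = 0 := by simp [rvec]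
    rw [h0, zero_mul, zero_add]
    refine Finset.sum_congr rfl fun k _ => ?_
    have : rvec R n φ (iota n k) = φ (Pi.single k 1) := by
      simp only [rvec]
      rw [dif_neg (show (iota n k).val ≠ 0 from Nat.succ_ne_zero _)]
      congr 1
    rw [this]
    rfl
  funext i
  show ∑ j, Tmat R n φ i j * v j = _
  simp only [Tmat_apply', add_mul, ite_mul, one_mul, zero_mul, Finset.sum_add_distrib]
  rw [Finset.sum_ite_eq Finset.univ i v]
  simp only [Finset.mem_univ, if_true]
  by_cases hi : i.val = 0
  · simp only [hi, if_true, key, Pi.add_apply, eSc]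
  · simp only [hi, if_false, Finset.sum_const_zero, Pi.add_apply, eSc, add_zero]

theorem ext_mulVec {A B : Matrix (Fin n) (Fin n) R} (h : ∀ v, A *ᵥ v = B *ᵥ v) : A = B := by
  ext i j
  have := congrFun (h (Pi.single j 1)) i
  simpa using this

theorem eSc_add (c d : R) : eSc R n (c + d) = eSc R n c + eSc R n d := by
  funext i
  by_cases hi : i.val = 0 <;> simp [eSc, hi]

theorem Tmat_zero : Tmat R n 0 = 1 := by
  ext i j
  by_cases hij : i = j
  · subst hij; simp [Tmat]
  · simp [Tmat, Matrix.one_apply, hij]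

theorem Tmat_mul (hn : 0 < n) (φ ψ : (Fin (n - 1) → R) →ₗ[Rᵐᵒᵖ] R) :
    Tmat R n φ * Tmat R n ψ = Tmat R n (φ + ψ) := by
  apply ext_mulVec
  intro v
  rw [← Matrix.mulVec_mulVec, mulVec_Tmat R n hn, mulVec_Tmat R n hn, mulVec_Tmat R n hn,
    proj_add, proj_eSc, add_zero, LinearMap.add_apply, eSc_add]
  abel

theorem elem_unit_exists (hn : 0 < n) (s : Finset (Fin n)) (hs : (⟨0, hn⟩ : Fin n) ∉ s)
    (r : Fin n → R) :
    ∃ t : (Matrix (Fin n) (Fin n) R)ˣ, t ∈ ElemGroup R n ∧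
      t.val = 1 + ∑ j ∈ s, Matrix.single (⟨0, hn⟩ : Fin n) j (r j) := by
  classical
  induction s using Finset.induction_on with
  | empty => exact ⟨1, Subgroup.one_mem _, by simp⟩
  | @insert a s ha ih =>
    have h0a : (⟨0, hn⟩ : Fin n) ≠ a := fun h => hs (h ▸ Finset.mem_insert_self a s)
    have h0s : (⟨0, hn⟩ : Fin n) ∉ s := fun h => hs (Finset.mem_insert_of_mem h)
    obtain ⟨t, ht, htv⟩ := ih h0s
    set i0 : Fin n := ⟨0, hn⟩
    have hmul : ∀ c d : R, (1 + Matrix.single i0 a c) * (1 + Matrix.single i0 a d)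
        = 1 + Matrix.single i0 a (c + d) := by
      intro c d
      rw [mul_add, add_mul, add_mul]
      simp only [one_mul, mul_one]
      rw [Matrix.single_mul_single_of_ne (c := c) i0 a i0 (Ne.symm h0a) d, Matrix.single_add]
      abel
    refine ⟨t * ⟨1 + Matrix.single i0 a (r a), 1 + Matrix.single i0 a (-(r a)),
        by rw [hmul]; simp, by rw [hmul]; simp⟩,
      mul_mem ht (Subgroup.subset_closure ⟨i0, a, r a, h0a, rfl⟩), ?_⟩
    rw [Units.val_mul, htv]
    show (1 + ∑ j ∈ s, Matrix.single i0 j (r j)) * (1 + Matrix.single i0 a (r a)) = _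
    rw [mul_add, add_mul, add_mul]
    simp only [one_mul, mul_one]
    rw [Finset.sum_mul]
    have hz : ∀ j ∈ s, Matrix.single i0 j (r j) * Matrix.single i0 a (r a) = 0 := by
      intro j hj
      exact Matrix.single_mul_single_of_ne (c := r j) i0 j i0 (fun h => h0s (by rw [← h]; exact hj)) (r a)
    rw [Finset.sum_congr rfl hz, Finset.sum_const_zero, Finset.sum_insert ha]
    abel

theorem Tmat_eq_sum (hn : 0 < n) (φ : (Fin (n - 1) → R) →ₗ[Rᵐᵒᵖ] R) :
    Tmat R n φ = 1 + ∑ j ∈ Finset.univ.erase (⟨0, hn⟩ : Fin n),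
      Matrix.single (⟨0, hn⟩ : Fin n) j (rvec R n φ j) := by
  ext i j
  rw [Tmat_apply']
  simp only [Matrix.add_apply, Matrix.one_apply, Matrix.sum_apply]
  have hterm : ∀ j' ∈ Finset.univ.erase (⟨0, hn⟩ : Fin n),
      Matrix.single (⟨0, hn⟩ : Fin n) j' (rvec R n φ j') i j
        = if j' = j then (if (⟨0, hn⟩ : Fin n) = i then (rvec R n φ j') else 0) else 0 := by
    intro j' _
    simp only [Matrix.single, Matrix.of_apply]
    by_cases h1 : (⟨0, hn⟩ : Fin n) = i <;> by_cases h2 : j' = j <;> simp [h1, h2]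
  rw [Finset.sum_congr rfl hterm, Finset.sum_ite_eq' (Finset.univ.erase (⟨0, hn⟩ : Fin n)) j]
  congr 1
  by_cases hj : j ∈ Finset.univ.erase (⟨0, hn⟩ : Fin n)
  · have hj0 : j.val ≠ 0 := by
      intro h
      exact (Finset.mem_erase.mp hj).1 (Fin.ext h)
    have : ((⟨0, hn⟩ : Fin n) = i) = (i.val = 0) := by
      simp [Fin.ext_iff, eq_comm]
    simp [hj, this]
  · have hj0 : j = ⟨0, hn⟩ := by
      by_contra hne
      exact hj (Finset.mem_erase.mpr ⟨hne, Finset.mem_univ j⟩)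
    have : rvec R n φ j = 0 := by subst hj0; simp [rvec]
    simp [hj, this]

theorem exists_unit_Tmat (hn : 0 < n) (φ : (Fin (n - 1) → R) →ₗ[Rᵐᵒᵖ] R) :
    ∃ t : (Matrix (Fin n) (Fin n) R)ˣ, t ∈ ElemGroup R n ∧ t.val = Tmat R n φ := by
  obtain ⟨t, ht, htv⟩ := elem_unit_exists R n hn (Finset.univ.erase (⟨0, hn⟩ : Fin n))
    (Finset.notMem_erase _ _) (rvec R n φ)
  exact ⟨t, ht, by rw [htv, Tmat_eq_sum R n hn]⟩

theorem eOne_mul (c : R) : (fun i => eOne R n i * c) = eSc R n c := by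
  funext i
  by_cases hi : i.val = 0 <;> simp [eOne, eSc, hi]

theorem mulVec_eSc (A : Matrix (Fin n) (Fin n) R) (c : R) :
    A *ᵥ eSc R n c = fun i => (A *ᵥ eOne R n) i * c := by
  funext i
  show ∑ j, A i j * eSc R n c j = (∑ j, A i j * eOne R n j) * c
  rw [Finset.sum_mul]
  refine Finset.sum_congr rfl fun j _ => ?_
  by_cases hj : j.val = 0 <;> simp [eSc, eOne, hj]

theorem mulVec_eSc_of_fix {A : Matrix (Fin n) (Fin n) R} (hA : A *ᵥ eOne R n = eOne R n)
    (c : R) : A *ᵥ eSc R n c = eSc R n c := by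
  rw [mulVec_eSc, hA, eOne_mul]

theorem proj_emb (u : Fin (n - 1) → R) : proj R n (emb R n u) = u := by
  funext k
  have h1 : (iota n k).val = k.val + 1 := rfl
  simp only [proj, emb, h1]
  rw [dif_neg (by omega)]
  congr 1

theorem emb_proj (hn : 0 < n) (v : Fin n → R) :
    emb R n (proj R n v) = v - eSc R n (v ⟨0, hn⟩) := by
  funext i
  by_cases hi : i.val = 0
  · have : i = ⟨0, hn⟩ := Fin.ext hi
    subst this
    simp [emb, eSc]
  · have hlt : i.val - 1 < n - 1 := by have := i.isLt; omega
    have : proj R n v ⟨i.val - 1, hlt⟩ = v i := by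
      simp only [proj, iota]
      congr 1
      exact Fin.ext (by simp; omega)
    simp only [emb, dif_neg hi, Pi.sub_apply, eSc, if_neg hi, sub_zero]
    exact this

theorem emb_add (u v : Fin (n - 1) → R) : emb R n (u + v) = emb R n u + emb R n v := by
  funext i
  by_cases hi : i.val = 0 <;> simp [emb, hi]

theorem emb_smul (c : Rᵐᵒᵖ) (u : Fin (n - 1) → R) : emb R n (c • u) = c • emb R n u := by
  funext i
  by_cases hi : i.val = 0 <;> simp [emb, hi, op_smul_eq_mul]

theorem proj_smul (c : Rᵐᵒᵖ) (v : Fin n → R) : proj R n (c • v) = c • proj R n v := rfl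

/-- conjugated functional -/
def psiMap (A : Matrix (Fin n) (Fin n) R) (φ : (Fin (n - 1) → R) →ₗ[Rᵐᵒᵖ] R) :
    (Fin (n - 1) → R) →ₗ[Rᵐᵒᵖ] R where
  toFun := fun u => φ (proj R n (A *ᵥ emb R n u))
  map_add' := fun u v => by
    rw [emb_add, Matrix.mulVec_add, proj_add, map_add]
  map_smul' := fun c u => by
    rw [emb_smul, Matrix.mulVec_smul, proj_smul, LinearMap.map_smul]
    rfl

theorem eSc_zero : eSc R n (0 : R) = 0 := by
  funext i
  by_cases hi : i.val = 0 <;> simp [eSc, hi]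

theorem proj_sub (v w : Fin n → R) : proj R n (v - w) = proj R n v - proj R n w := rfl


/-- For `n ≥ 3`, `R` an infinite `(n-1)`-rigid ring and
`g₁, …, g_{n-2} ∈ E_n(R)`, the set `T = {T_φ : φ ∈ Φ}` is a normal subgroup of
`Q ∩ g₁Qg₁⁻¹ ∩ ⋯ ∩ g_{n-2}Qg_{n-2}⁻¹`. -/
theorem Tset_normal_in_intersection [Infinite R] (hn : 3 ≤ n)
    (hR : ∀ f : (Fin (n - 1) → R) →ₗ[Rᵐᵒᵖ] (Fin (n - 1 - 1) → R),
      (LinearMap.ker f : Set (Fin (n - 1) → R)).Infinite)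
    (g : Fin (n - 2) → (Matrix (Fin n) (Fin n) R)ˣ)
    (hg : ∀ i, g i ∈ ElemGroup R n) :
    Tset R n g ⊆ (Qstab R n ∩ ⋂ i, {x | (g i)⁻¹ * x * g i ∈ Qstab R n}) ∧
    (1 : (Matrix (Fin n) (Fin n) R)ˣ) ∈ Tset R n g ∧
    (∀ a ∈ Tset R n g, ∀ b ∈ Tset R n g, a * b⁻¹ ∈ Tset R n g) ∧
    (∀ h ∈ (Qstab R n ∩ ⋂ i, {x | (g i)⁻¹ * x * g i ∈ Qstab R n}),
      ∀ t ∈ Tset R n g, h * t * h⁻¹ ∈ Tset R n g) := by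
  have hn0 : 0 < n := by omega
  have hTfix : ∀ φ : (Fin (n - 1) → R) →ₗ[Rᵐᵒᵖ] R,
      Tmat R n φ *ᵥ eOne R n = eOne R n := by
    intro φ
    rw [mulVec_Tmat R n hn0]
    have h1 : proj R n (eOne R n) = 0 := proj_eSc R n 1
    rw [h1, map_zero, eSc_zero, add_zero]
  have hTfixg : ∀ φ ∈ Phi R n g, ∀ i,
      Tmat R n φ *ᵥ ((g i).val *ᵥ eOne R n) = (g i).val *ᵥ eOne R n := by
    intro φ hφ i
    rw [mulVec_Tmat R n hn0]
    have h1 : proj R n ((g i).val *ᵥ eOne R n) = uVec R n (g i) := rfl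
    rw [h1, hφ i, eSc_zero, add_zero]
  have subset1 : Tset R n g ⊆ Qstab R n ∩ ⋂ i, {x | (g i)⁻¹ * x * g i ∈ Qstab R n} := by
    rintro t ⟨φ, hφ, htv⟩
    obtain ⟨t', ht', ht'v⟩ := exists_unit_Tmat R n hn0 φ
    have htt' : t = t' := Units.ext (by rw [htv, ht'v])
    have htElem : t ∈ ElemGroup R n := htt' ▸ ht'
    refine ⟨⟨htElem, by rw [htv]; exact hTfix φ⟩, Set.mem_iInter.mpr fun i => ?_⟩
    refine ⟨mul_mem (mul_mem (inv_mem (hg i)) htElem) (hg i), ?_⟩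
    show ((g i)⁻¹ * t * g i).val *ᵥ eOne R n = eOne R n
    rw [Units.val_mul, Units.val_mul, ← Matrix.mulVec_mulVec, ← Matrix.mulVec_mulVec, htv,
      hTfixg φ hφ i, Matrix.mulVec_mulVec, Units.inv_mul, Matrix.one_mulVec]
  refine ⟨subset1, ⟨0, fun i => LinearMap.zero_apply _, by rw [Units.val_one, Tmat_zero]⟩, ?_, ?_⟩
  · rintro a ⟨φa, hφa, hav⟩ b ⟨φb, hφb, hbv⟩
    have hbinv : (b⁻¹).val = Tmat R n (-φb) := by
      have h1 : b.val * Tmat R n (-φb) = 1 := by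
        rw [hbv, Tmat_mul R n hn0, add_neg_cancel, Tmat_zero]
      have h2 : (b⁻¹).val * (b.val * Tmat R n (-φb)) = (b⁻¹).val := by rw [h1, mul_one]
      rw [← mul_assoc, Units.inv_mul, one_mul] at h2
      exact h2.symm
    refine ⟨φa + (-φb), fun i => ?_, ?_⟩
    · simp only [LinearMap.add_apply, LinearMap.neg_apply, hφa i, hφb i, neg_zero, add_zero]
    · rw [Units.val_mul, hav, hbinv, Tmat_mul R n hn0]
  · rintro h ⟨⟨hhElem, hhfix⟩, hhI⟩ t ⟨φ, hφ, htv⟩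
    have hhfixg : ∀ i, h.val *ᵥ ((g i).val *ᵥ eOne R n)
        = (g i).val *ᵥ eOne R n := by
      intro i
      have h2 : ((g i)⁻¹ * h * g i).val *ᵥ eOne R n = eOne R n :=
        (Set.mem_iInter.mp hhI i).2
      rw [Units.val_mul, Units.val_mul, ← Matrix.mulVec_mulVec, ← Matrix.mulVec_mulVec] at h2
      have h3 := congrArg (fun w => (g i).val *ᵥ w) h2
      rwa [Matrix.mulVec_mulVec, Units.mul_inv, Matrix.one_mulVec] at h3
    have hinvfix : (h⁻¹).val *ᵥ eOne R n = eOne R n := by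
      conv_lhs => rw [← hhfix]
      rw [Matrix.mulVec_mulVec, Units.inv_mul, Matrix.one_mulVec]
    have hinvfixg : ∀ i, (h⁻¹).val *ᵥ ((g i).val *ᵥ eOne R n)
        = (g i).val *ᵥ eOne R n := by
      intro i
      conv_lhs => rw [← hhfixg i]
      rw [Matrix.mulVec_mulVec, Matrix.mulVec_mulVec, Units.inv_mul, one_mul]
    set ψ := psiMap R n (h⁻¹).val φ with hψdef
    have hψPhi : ∀ i, ψ (uVec R n (g i)) = 0 := by
      intro i
      show φ (proj R n ((h⁻¹).val *ᵥ emb R n (uVec R n (g i)))) = 0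
      have h1 : emb R n (uVec R n (g i))
          = (g i).val *ᵥ eOne R n - eSc R n (((g i).val *ᵥ eOne R n) ⟨0, hn0⟩) :=
        emb_proj R n hn0 _
      rw [h1, Matrix.mulVec_sub, hinvfixg i, mulVec_eSc_of_fix R n hinvfix, proj_sub, proj_eSc,
        sub_zero]
      exact hφ i
    have hval : (h * t * h⁻¹).val = Tmat R n ψ := by
      apply ext_mulVec
      intro v
      rw [Units.val_mul, Units.val_mul, ← Matrix.mulVec_mulVec, ← Matrix.mulVec_mulVec, htv,
        mulVec_Tmat R n hn0, Matrix.mulVec_add, Matrix.mulVec_mulVec, Units.mul_inv,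
        Matrix.one_mulVec, mulVec_eSc_of_fix R n hhfix, mulVec_Tmat R n hn0]
      refine congrArg (fun c => v + eSc R n c) ?_
      show φ (proj R n ((h⁻¹).val *ᵥ v))
          = φ (proj R n ((h⁻¹).val *ᵥ emb R n (proj R n v)))
      have h1 : emb R n (proj R n v) = v - eSc R n (v ⟨0, hn0⟩) := emb_proj R n hn0 v
      rw [h1, Matrix.mulVec_sub, mulVec_eSc_of_fix R n hinvfix, proj_sub, proj_eSc, sub_zero]
    exact ⟨ψ, hψPhi, hval⟩
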